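/- The set of P-semigroups with multiplicity m is infinite if and only if there exists p ∈ P such that gcd(m, p) ≠ 1, where P is a finite set of positive integers and m ≥ 2. -/
import Mathlib


/-- A numerical semigroup: a cofinite submonoid of `ℕ`. -/
def IsNumSgp (S : Set ℕ) : Prop :=
  0 ∈ S ∧ (∀ x ∈ S, ∀ y ∈ S, x + y ∈ S) ∧ Sᶜ.Finite

/-- `S` is a `P`-semigroup: for every nonzero `s ∈ S` there is `p ∈ P` with `s + p ∈ S`. -/
def IsPSgpN (P : Finset ℕ) (S : Set ℕ) : Prop :=
  ∀ s ∈ S, s ≠ 0 → ∃ p ∈ P, s + p ∈ S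

/-- `m` is the multiplicity of `S`, i.e. its least nonzero element. -/
def HasMult (S : Set ℕ) (m : ℕ) : Prop :=
  m ∈ S ∧ m ≠ 0 ∧ ∀ s ∈ S, s ≠ 0 → m ≤ s

lemma aux_mul_mem {S : Set ℕ} (h0 : 0 ∈ S)
    (hadd : ∀ x ∈ S, ∀ y ∈ S, x + y ∈ S) {x : ℕ} (hx : x ∈ S) :
    ∀ a : ℕ, a * x ∈ S := by
  intro a
  induction a with
  | zero => simpa using h0
  | succ n ih =>
    have := hadd _ ih _ hx
    simpa [Nat.succ_mul] using this

lemma aux_frob {m c : ℕ} (hm : 2 ≤ m) (hco : Nat.Coprime m c) {n : ℕ}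
    (hn : m * c ≤ n) : ∃ a b : ℕ, n = a * m + b * c := by
  haveI : NeZero m := ⟨by omega⟩
  have hc : 0 < c := by
    rcases Nat.eq_zero_or_pos c with h | h
    · exfalso; rw [h] at hco; simp [Nat.Coprime] at hco; omega
    · exact h
  have hu : IsUnit (c : ZMod m) := by
    rw [ZMod.isUnit_iff_coprime]
    exact hco.symm
  set b : ℕ := ((n : ZMod m) * (c : ZMod m)⁻¹).val with hbdef
  have hblt : b < m := ZMod.val_lt _
  have hbc : (b : ZMod m) * (c : ZMod m) = (n : ZMod m) := by
    rw [hbdef, ZMod.natCast_val, ZMod.cast_id, mul_assoc,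
      ZMod.inv_mul_of_unit _ hu, mul_one]
  have hle : b * c ≤ n := by
    calc b * c ≤ (m - 1) * c := Nat.mul_le_mul_right _ (by omega)
    _ ≤ m * c := Nat.mul_le_mul_right _ (by omega)
    _ ≤ n := hn
  have hdvd : m ∣ n - b * c := by
    rw [← ZMod.natCast_eq_zero_iff]
    push_cast [hle]
    rw [hbc, sub_self]
  obtain ⟨a, ha⟩ := hdvd
  exact ⟨a, b, by rw [Nat.mul_comm a m]; omega⟩

theorem stmt_11 (P : Finset ℕ) (hPpos : ∀ p ∈ P, 0 < p)
    (m : ℕ) (hm : 2 ≤ m) :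
    {S : Set ℕ | IsNumSgp S ∧ HasMult S m ∧ IsPSgpN P S}.Infinite ↔
      ∃ p ∈ P, Nat.gcd m p ≠ 1 := by
  constructor
  · intro hinf
    by_contra hno
    push_neg at hno
    apply hinf
    rcases P.eq_empty_or_nonempty with hP | hP
    · have : {S : Set ℕ | IsNumSgp S ∧ HasMult S m ∧ IsPSgpN P S} = ∅ := by
        ext S
        simp only [Set.mem_setOf_eq, Set.mem_empty_iff_false, iff_false]
        rintro ⟨_, ⟨hmS, hm0, _⟩, hPS⟩
        obtain ⟨p, hp, -⟩ := hPS m hmS hm0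
        simp [hP] at hp
      rw [this]; exact Set.finite_empty
    · set N := m * (m + P.max' hP) with hN
      have hsub : {S : Set ℕ | IsNumSgp S ∧ HasMult S m ∧ IsPSgpN P S} ⊆
          (fun T : Set ℕ => T ∪ Set.Ici N) '' {T | T ⊆ Set.Iio N} := by
        rintro S ⟨⟨h0, hadd, -⟩, ⟨hmS, hm0, -⟩, hPS⟩
        have hIci : ∀ n, N ≤ n → n ∈ S := by
          intro n hn
          obtain ⟨p, hpP, hmpS⟩ := hPS m hmS hm0
          have hcop : Nat.Coprime m (m + p) := by
            unfold Nat.Coprime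
            rw [Nat.add_comm, Nat.gcd_add_self_right]
            exact hno p hpP
          have hple : p ≤ P.max' hP := P.le_max' p hpP
          have h1 : m * (m + p) ≤ N := Nat.mul_le_mul_left m (by omega)
          obtain ⟨a, b, hab⟩ := aux_frob hm hcop (le_trans h1 hn)
          rw [hab]
          exact hadd _ (aux_mul_mem h0 hadd hmS a) _ (aux_mul_mem h0 hadd hmpS b)
        refine ⟨S ∩ Set.Iio N, Set.inter_subset_right, ?_⟩
        ext n
        simp only [Set.mem_union, Set.mem_inter_iff, Set.mem_Iio, Set.mem_Ici]
        constructor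
        · rintro (⟨h, -⟩ | h)
          · exact h
          · exact hIci n h
        · intro h
          rcases lt_or_ge n N with h' | h'
          · exact Or.inl ⟨h, h'⟩
          · exact Or.inr h'
      exact Set.Finite.subset (((Set.finite_Iio N).finite_subsets).image _) hsub
  · rintro ⟨p, hpP, hgcd⟩
    obtain ⟨d, hd⟩ : ∃ d, d = Nat.gcd m p := ⟨_, rfl⟩
    have hdm : d ∣ m := hd ▸ Nat.gcd_dvd_left m p
    have hdp : d ∣ p := hd ▸ Nat.gcd_dvd_right m p
    have hd0 : 0 < Nat.gcd m p := Nat.gcd_pos_of_pos_left p (by omega)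
    have hd2 : 2 ≤ d := by rw [hd]; omega
    have hFnd : ∀ k : ℕ, ¬ d ∣ m * d * (k + 1) + 1 := by
      intro k hdvd
      have h1 : d ∣ 1 := (Nat.dvd_add_right ⟨m * (k + 1), by ring⟩).mp hdvd
      have := Nat.le_of_dvd one_pos h1
      omega
    have hFm : ∀ k : ℕ, m + 1 ≤ m * d * (k + 1) + 1 := by
      intro k
      have h := Nat.mul_le_mul (Nat.mul_le_mul_left m (show 1 ≤ d by omega))
        (show 1 ≤ k + 1 by omega)
      omega
    refine Set.infinite_of_injective_forall_mem
      (f := fun k : ℕ => {0} ∪ {n | d ∣ n ∧ m ≤ n} ∪ {n | m * d * (k + 1) + 1 ≤ n}) ?_ ?_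
    · have key : ∀ a b : ℕ,
          ({0} ∪ {n | d ∣ n ∧ m ≤ n} ∪ {n | m * d * (a + 1) + 1 ≤ n} : Set ℕ) =
          ({0} ∪ {n | d ∣ n ∧ m ≤ n} ∪ {n | m * d * (b + 1) + 1 ≤ n} : Set ℕ) →
          m * d * (b + 1) + 1 ≤ m * d * (a + 1) + 1 := by
        intro a b h
        have h1 : m * d * (a + 1) + 1 ∈
            ({0} ∪ {n | d ∣ n ∧ m ≤ n} ∪ {n | m * d * (a + 1) + 1 ≤ n} : Set ℕ) := by
          simp
        rw [h] at h1
        simp only [Set.mem_union, Set.mem_singleton_iff, Set.mem_setOf_eq] at h1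
        rcases h1 with (h1 | h1) | h1
        · omega
        · exact absurd h1.1 (hFnd a)
        · exact h1
      intro k k' hkk'
      have hkk2 : ({0} ∪ {n | d ∣ n ∧ m ≤ n} ∪ {n | m * d * (k + 1) + 1 ≤ n} : Set ℕ) =
          ({0} ∪ {n | d ∣ n ∧ m ≤ n} ∪ {n | m * d * (k' + 1) + 1 ≤ n} : Set ℕ) := hkk'
      have h1 := key k k' hkk2
      have h2 := key k' k hkk2.symm
      have hmd : 0 < m * d := by positivity
      have : m * d * (k + 1) = m * d * (k' + 1) := by omega
      have := Nat.eq_of_mul_eq_mul_left hmd this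
      omega
    · intro k
      simp only [Set.mem_setOf_eq]
      refine ⟨⟨?_, ?_, ?_⟩, ⟨?_, by omega, ?_⟩, ?_⟩
      · simp
      · rintro x hx y hy
        simp only [Set.mem_union, Set.mem_singleton_iff, Set.mem_setOf_eq] at hx hy ⊢
        rcases hx with (rfl | hx) | hx
        · simpa using hy
        · rcases hy with (rfl | hy) | hy
          · simp [hx]
          · exact Or.inl (Or.inr ⟨Nat.dvd_add hx.1 hy.1, by omega⟩)
          · exact Or.inr (by omega)
        · exact Or.inr (by omega)
      · apply Set.Finite.subset (Set.finite_Iio (m * d * (k + 1) + 1))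
        intro n hn
        simp only [Set.mem_compl_iff, Set.mem_union, Set.mem_singleton_iff,
          Set.mem_setOf_eq, not_or] at hn
        simp only [Set.mem_Iio]
        omega
      · exact Or.inl (Or.inr ⟨hdm, le_refl m⟩)
      · intro s hs hs0
        simp only [Set.mem_union, Set.mem_singleton_iff, Set.mem_setOf_eq] at hs
        have := hFm k
        rcases hs with (rfl | hs) | hs
        · omega
        · exact hs.2
        · omega
      · intro s hs hs0
        refine ⟨p, hpP, ?_⟩
        simp only [Set.mem_union, Set.mem_singleton_iff, Set.mem_setOf_eq] at hs ⊢
        rcases hs with (rfl | hs) | hs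
        · omega
        · exact Or.inl (Or.inr ⟨Nat.dvd_add hs.1 hdp, by omega⟩)
        · exact Or.inr (by omega)
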